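/- Fix an infinite cardinal λ and a bijection Φ : ω × ω → ω ∖ {0,1}. An ℵ₀-colored tree on λ is a structure M = (λ^{<ω}, ⊴, (P_j^M)_{j<ω}) with each P_j^M ⊆ λ^{<ω}. For m ∈ ω let ω^{≤m} be the tree of all sequences from ω of length ≤ m, and for V ⊆ ω ∖ {0,1} let S_V be the rooted tree consisting of pairwise disjoint copies of the trees ω^{≤m} for m ∈ V, identified at their roots. For an ℵ₀-colored tree M and η ∈ λ^{<ω}, let V_M(η) := {Φ(lg(η), j) : j < ω and η ∈ P_j^M}, and let f(M) := T₀*(S_{V_M(η)} : η ∈ T₀), where T₀ = λ^{<ω}. Then: (i) for every ℵ₀-colored tree M on λ, the partial order f(M) is isomorphic to a special subtree of λ^{<ω}; and (ii) for all ℵ₀-colored trees M, N on λ: M ≡∞ℵ₀ N if and only if f(M) ≡∞ℵ₀ f(N) (as structures with the order alone). -/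

import Mathlib

noncomputable section

/-- a finite partial map (given by its graph `p`) between structures each with a
single binary relation is a partial isomorphism if it is functional, injective,
and preserves and reflects the relation. -/
def IsPartialIso {M N : Type*} (r : M → M → Prop) (s : N → N → Prop)
    (p : Finset (M × N)) : Prop :=
  (∀ x y y', (x, y) ∈ p → (x, y') ∈ p → y = y') ∧
  (∀ x x' y, (x, y) ∈ p → (x', y) ∈ p → x = x') ∧
  (∀ x y x' y', (x, y) ∈ p → (x', y') ∈ p → (r x x' ↔ s y y'))

/-- back-and-forth equivalence (`≡∞ℵ₀`) of two structures, each consisting of a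
single binary relation: a nonempty family of finite partial isomorphisms with the
back-and-forth extension property. -/
def BackForth {M N : Type*} (r : M → M → Prop) (s : N → N → Prop) : Prop :=
  ∃ F : Set (Finset (M × N)), F.Nonempty ∧
    (∀ p ∈ F, IsPartialIso r s p) ∧
    ∀ p ∈ F, ∀ a : M, ∀ b : N,
      ∃ q ∈ F, p ⊆ q ∧ (∃ b', (a, b') ∈ q) ∧ (∃ a', (a', b) ∈ q)

/-- a subtree of `λ^{<ω}`: a nonempty set of finite sequences closed under
initial segments -/
def IsSubtree {lam : Type*} (T : Set (List lam)) : Prop :=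
  T.Nonempty ∧ ∀ l ∈ T, ∀ l', l' <+: l → l' ∈ T

/-- `η` is contained in a branch of `T`: some `ν ∈ λ^ω` extends `η` with all its
finite restrictions in `T`. -/
def InBranch {lam : Type*} (T : Set (List lam)) (η : List lam) : Prop :=
  ∃ ν : ℕ → lam, (∀ n : ℕ, (List.ofFn fun i : Fin n => ν i) ∈ T) ∧
    η = List.ofFn fun i : Fin η.length => ν i

/-- `T` is special: for every `η ∈ T` contained in a branch, every immediate
successor of `η` in `T` has a proper extension in `T`. -/
def IsSpecial {lam : Type*} (T : Set (List lam)) : Prop :=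
  ∀ η ∈ T, InBranch T η →
    ∀ ν ∈ T, η <+: ν → ν.length = η.length + 1 →
      ∃ ρ ∈ T, ν <+: ρ ∧ ν ≠ ρ

/-- back-and-forth equivalence of two colored trees on `λ^{<ω}` (with colors indexed
by `ι`): a nonempty family of finite partial maps, functional and injective, preserving
and reflecting the initial-segment relation and all the colors, with the back-and-forth
extension property. -/
def ColBackForth {lam ι : Type*} (P Q : ι → Set (List lam)) : Prop :=
  ∃ F : Set (Finset (List lam × List lam)), F.Nonempty ∧
    (∀ p ∈ F,
      (∀ x y y', (x, y) ∈ p → (x, y') ∈ p → y = y') ∧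
      (∀ x x' y, (x, y) ∈ p → (x', y) ∈ p → x = x') ∧
      (∀ x y x' y', (x, y) ∈ p → (x', y') ∈ p → (x <+: x' ↔ y <+: y')) ∧
      (∀ x y, (x, y) ∈ p → ∀ j : ι, x ∈ P j ↔ y ∈ Q j)) ∧
    ∀ p ∈ F, ∀ a b : List lam,
      ∃ q ∈ F, p ⊆ q ∧ (∃ b', (a, b') ∈ q) ∧ (∃ a', (a', b) ∈ q)

/-- `V_M(η) = {Φ(lg η, j) : j < ω, η ∈ P_j}` -/
def colorSet {lam : Type*} (Φ : ℕ × ℕ → ℕ) (P : ℕ → Set (List lam)) (η : List lam) :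
    Set ℕ :=
  {c | ∃ j : ℕ, η ∈ P j ∧ Φ (η.length, j) = c}

/-- the universe of the attached tree `f(M) = T₀*(S_{V(η)} : η ∈ T₀)`, `T₀ = λ^{<ω}`:
either a node `η` of `T₀`, or a non-root node of the copy of `S_{V(η)}` attached at
`η`, i.e. a triple `(η, m, s)` with `m ∈ V(η)` and `s` a nonempty sequence from `ω`
of length at most `m` (a non-root node of the copy of `ω^{≤m}` inside `S_{V(η)}`). -/
def AttachCar (lam : Type*) (V : List lam → Set ℕ) : Type _ :=
  {x : List lam ⊕ (List lam × ℕ × List ℕ) //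
    ∀ η mv s, x = Sum.inr (η, mv, s) → mv ∈ V η ∧ s ≠ [] ∧ s.length ≤ mv}

/-- the order of the attached tree: on `T₀` it is the initial segment relation;
a node of `T₀` is below a non-root node of `S_{V(ν)}` iff it is `⊴ ν`; within
an attached part, `(η,m,s) ≤ (η,m,t)` iff `s ⊴ t` (in the same copy of `ω^{≤m}`). -/
def AttachLe {lam : Type*} (x y : List lam ⊕ (List lam × ℕ × List ℕ)) : Prop :=
  (∃ η ν, x = Sum.inl η ∧ y = Sum.inl ν ∧ η <+: ν) ∨
  (∃ η ν mv s, x = Sum.inl η ∧ y = Sum.inr (ν, mv, s) ∧ η <+: ν) ∨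
  (∃ η mv s t, x = Sum.inr (η, mv, s) ∧ y = Sum.inr (η, mv, t) ∧ s <+: t)

section AttachLemmas
variable {lam : Type*}

@[simp] lemma attachLe_inl_inl {η ν : List lam} :
    AttachLe (Sum.inl η) (Sum.inl ν) ↔ η <+: ν := by
  simp [AttachLe]

@[simp] lemma attachLe_inl_inr {η ν : List lam} {m : ℕ} {s : List ℕ} :
    AttachLe (Sum.inl η) (Sum.inr (ν, m, s)) ↔ η <+: ν := by
  simp [AttachLe]

@[simp] lemma attachLe_inr_inl {z : List lam × ℕ × List ℕ} {ν : List lam} :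
    ¬ AttachLe (Sum.inr z) (Sum.inl ν) := by
  simp [AttachLe]

@[simp] lemma attachLe_inr_inr {η ν : List lam} {m m' : ℕ} {s t : List ℕ} :
    AttachLe (Sum.inr (η, m, s)) (Sum.inr (ν, m', t)) ↔ η = ν ∧ m = m' ∧ s <+: t := by
  constructor
  · rintro (⟨_, _, h, _⟩ | ⟨_, _, _, _, h, _⟩ | ⟨η', mv, s', t', h1, h2, h3⟩)
    · exact absurd h (by simp)
    · exact absurd h (by simp)
    · obtain ⟨rfl, rfl, rfl⟩ : η = η' ∧ m = mv ∧ s = s' := by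
        simpa [Prod.ext_iff] using h1
      obtain ⟨rfl, rfl, rfl⟩ : η = ν ∧ m = m' ∧ t' = t := by
        simpa [Prod.ext_iff, eq_comm] using h2
      exact ⟨rfl, rfl, h3⟩
  · rintro ⟨rfl, rfl, h⟩
    exact Or.inr (Or.inr ⟨η, m, s, t, rfl, rfl, h⟩)

lemma attachLe_any_inl {x : List lam ⊕ (List lam × ℕ × List ℕ)} {ν : List lam} :
    AttachLe x (Sum.inl ν) ↔ ∃ ρ, x = Sum.inl ρ ∧ ρ <+: ν := by
  cases x with
  | inl ρ => simp
  | inr z => simp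

lemma attachLe_inr_any {η : List lam} {m : ℕ} {s : List ℕ}
    {y : List lam ⊕ (List lam × ℕ × List ℕ)} :
    AttachLe (Sum.inr (η, m, s)) y ↔ ∃ t, y = Sum.inr (η, m, t) ∧ s <+: t := by
  cases y with
  | inl ρ => simp
  | inr z =>
    obtain ⟨ν, m', t⟩ := z
    simp only [attachLe_inr_inr, Sum.inr.injEq, Prod.mk.injEq]
    constructor
    · rintro ⟨rfl, rfl, h⟩; exact ⟨t, ⟨rfl, rfl, rfl⟩, h⟩
    · rintro ⟨t', ⟨rfl, rfl, rfl⟩, h⟩; exact ⟨rfl, rfl, h⟩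

@[simp] lemma attachLe_refl (x : List lam ⊕ (List lam × ℕ × List ℕ)) : AttachLe x x := by
  cases x with
  | inl η => simp
  | inr z => obtain ⟨η, m, s⟩ := z; simp

end AttachLemmas

/-! ### Generic back-and-forth families -/

section BFF
open scoped Classical
variable {M N : Type*} {r : M → M → Prop} {s : N → N → Prop}

def IsBFF (r : M → M → Prop) (s : N → N → Prop) (F : Set (Finset (M × N))) : Prop :=
  (∀ p ∈ F, IsPartialIso r s p) ∧
  ∀ p ∈ F, ∀ a : M, ∀ b : N,
    ∃ q ∈ F, p ⊆ q ∧ (∃ b', (a, b') ∈ q) ∧ (∃ a', (a', b) ∈ q)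

@[simp] lemma mem_image_swap {p : Finset (M × N)} {x : M} {y : N} :
    (y, x) ∈ p.image Prod.swap ↔ (x, y) ∈ p := by
  simp only [Finset.mem_image, Prod.swap_eq_iff_eq_swap]
  constructor
  · rintro ⟨z, hz, h⟩; rwa [show z = (x, y) by simpa [Prod.ext_iff] using h] at hz
  · intro h; exact ⟨(x, y), h, rfl⟩

lemma IsBFF.swap (h : IsBFF r s F) :
    IsBFF s r ((fun p : Finset (M × N) => p.image Prod.swap) '' F) := by
  constructor
  · rintro q ⟨p, hp, rfl⟩
    obtain ⟨h1, h2, h3⟩ := h.1 p hp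
    refine ⟨?_, ?_, ?_⟩
    · intro x y y' hxy hxy'
      exact h2 y y' x (mem_image_swap.1 hxy) (mem_image_swap.1 hxy')
    · intro x x' y hxy hxy'
      exact h1 y x x' (mem_image_swap.1 hxy) (mem_image_swap.1 hxy')
    · intro x y x' y' hxy hxy'
      exact (h3 y x y' x' (mem_image_swap.1 hxy) (mem_image_swap.1 hxy')).symm
  · rintro q ⟨p, hp, rfl⟩ a b
    obtain ⟨q', hq', hsub, ⟨b', hb'⟩, ⟨a', ha'⟩⟩ := h.2 p hp b a
    refine ⟨q'.image Prod.swap, ⟨q', hq', rfl⟩, ?_, ⟨a', mem_image_swap.2 ha'⟩,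
      ⟨b', mem_image_swap.2 hb'⟩⟩
    intro z hz
    obtain ⟨w, hw, rfl⟩ := Finset.mem_image.1 hz
    exact Finset.mem_image.2 ⟨w, hsub hw, rfl⟩

variable [Nonempty M] [Nonempty N]

lemma IsBFF.extend_list {F : Set (Finset (M × N))} (h : IsBFF r s F) {p : Finset (M × N)}
    (hp : p ∈ F) (la : List M) (lb : List N) :
    ∃ q ∈ F, p ⊆ q ∧ (∀ a ∈ la, ∃ b, (a, b) ∈ q) ∧ (∀ b ∈ lb, ∃ a, (a, b) ∈ q) := by
  induction la generalizing p with
  | nil =>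
    induction lb generalizing p with
    | nil => exact ⟨p, hp, le_refl _, by simp, by simp⟩
    | cons b lb ih =>
      obtain ⟨q, hq, hsub, -, hb⟩ := h.2 p hp (Classical.arbitrary M) b
      obtain ⟨q', hq', hsub', _, hlb⟩ := ih hq
      refine ⟨q', hq', hsub.trans hsub', by simp, ?_⟩
      intro b' hb'
      rcases List.mem_cons.1 hb' with rfl | hb'
      · obtain ⟨a', ha'⟩ := hb; exact ⟨a', hsub' ha'⟩
      · exact hlb b' hb'
  | cons a la ih =>
    obtain ⟨q, hq, hsub, ha, -⟩ := h.2 p hp a (Classical.arbitrary N)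
    obtain ⟨q', hq', hsub', hla, hlb⟩ := ih hq
    refine ⟨q', hq', hsub.trans hsub', ?_, hlb⟩
    intro a' ha'
    rcases List.mem_cons.1 ha' with rfl | ha'
    · obtain ⟨b', hb'⟩ := ha; exact ⟨b', hsub' hb'⟩
    · exact hla a' ha'

lemma IsBFF.transfer {F : Set (Finset (M × N))} (h : IsBFF r s F) {p : Finset (M × N)}
    (hp : p ∈ F) (A : Finset M) :
    ∃ q ∈ F, p ⊆ q ∧ ∃ g : M → N, Set.InjOn g A ∧ ∀ x ∈ A, (x, g x) ∈ q := by
  obtain ⟨q, hq, hsub, hcov, -⟩ := h.extend_list hp A.toList []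
  have hex : ∀ x : M, ∃ y : N, x ∈ A → (x, y) ∈ q := by
    intro x
    by_cases hx : x ∈ A
    · obtain ⟨y, hy⟩ := hcov x (Finset.mem_toList.2 hx); exact ⟨y, fun _ => hy⟩
    · exact ⟨Classical.arbitrary N, fun h' => absurd h' hx⟩
  choose g hg using hex
  refine ⟨q, hq, hsub, g, ?_, fun x hx => hg x hx⟩
  intro x hx x' hx' heq
  exact (h.1 q hq).2.1 x x' _ (hg x (Finset.mem_coe.1 hx))
    (heq ▸ hg x' (Finset.mem_coe.1 hx'))

/-- counting below: if `(a,b) ∈ p ∈ F` and `A` is a finite set of elements all `r`-below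
`a`, and every finite set of elements `s`-below `b` has size `≤ n`, then `|A| ≤ n`. -/
lemma IsBFF.card_le_below {F : Set (Finset (M × N))} (h : IsBFF r s F) {p : Finset (M × N)}
    (hp : p ∈ F) {a : M} {b : N} (hab : (a, b) ∈ p) (A : Finset M) (hA : ∀ x ∈ A, r x a)
    (n : ℕ) (hbound : ∀ B : Finset N, (∀ y ∈ B, s y b) → B.card ≤ n) : A.card ≤ n := by
  obtain ⟨q, hq, hsub, g, hginj, hg⟩ := h.transfer hp A
  have hcard : (A.image g).card = A.card := Finset.card_image_of_injOn hginj
  rw [← hcard]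
  refine hbound _ ?_
  intro y hy
  obtain ⟨x, hx, rfl⟩ := Finset.mem_image.1 hy
  exact ((h.1 q hq).2.2 x (g x) a b (hg x hx) (hsub hab)).1 (hA x hx)

/-- counting chains above. -/
lemma IsBFF.card_le_above_chain {F : Set (Finset (M × N))} (h : IsBFF r s F)
    {p : Finset (M × N)} (hp : p ∈ F) {a : M} {b : N} (hab : (a, b) ∈ p) (A : Finset M)
    (hA : ∀ x ∈ A, r a x) (hchain : ∀ x ∈ A, ∀ x' ∈ A, r x x' ∨ r x' x)
    (n : ℕ)
    (hbound : ∀ B : Finset N, (∀ y ∈ B, s b y) → (∀ y ∈ B, ∀ y' ∈ B, s y y' ∨ s y' y) →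
      B.card ≤ n) : A.card ≤ n := by
  obtain ⟨q, hq, hsub, g, hginj, hg⟩ := h.transfer hp A
  have hcard : (A.image g).card = A.card := Finset.card_image_of_injOn hginj
  rw [← hcard]
  refine hbound _ ?_ ?_
  · intro y hy
    obtain ⟨x, hx, rfl⟩ := Finset.mem_image.1 hy
    exact ((h.1 q hq).2.2 a b x (g x) (hsub hab) (hg x hx)).1 (hA x hx)
  · intro y hy y' hy'
    obtain ⟨x, hx, rfl⟩ := Finset.mem_image.1 hy
    obtain ⟨x', hx', rfl⟩ := Finset.mem_image.1 hy'
    rcases hchain x hx x' hx' with hc | hc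
    · exact Or.inl (((h.1 q hq).2.2 x (g x) x' (g x') (hg x hx) (hg x' hx')).1 hc)
    · exact Or.inr (((h.1 q hq).2.2 x' (g x') x (g x) (hg x' hx') (hg x hx)).1 hc)

end BFF

/-! ### counting lemmas for lists and attach structures -/

section Counting
open scoped Classical
variable {α : Type*} {lam : Type*} {V : List lam → Set ℕ}

lemma list_bound_below (ν : List α) (B : Finset (List α)) (hB : ∀ y ∈ B, y <+: ν) :
    B.card ≤ ν.length + 1 := by
  have hinj : Set.InjOn List.length (B : Set (List α)) := by
    intro y hy y' hy' h
    rw [List.prefix_iff_eq_take.1 (hB y hy), List.prefix_iff_eq_take.1 (hB y' hy'), h]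
  calc B.card = (B.image List.length).card := (Finset.card_image_of_injOn hinj).symm
    _ ≤ (Finset.range (ν.length + 1)).card := by
        apply Finset.card_le_card
        intro n hn
        obtain ⟨y, hy, rfl⟩ := Finset.mem_image.1 hn
        exact Finset.mem_range.2 (Nat.lt_succ_of_le (hB y hy).length_le)
    _ = ν.length + 1 := Finset.card_range _

lemma list_exists_below (η : List α) :
    ∃ B : Finset (List α), B.card = η.length + 1 ∧ ∀ y ∈ B, y <+: η := by
  refine ⟨(Finset.range (η.length + 1)).image (fun k => η.take k), ?_, ?_⟩
  · rw [Finset.card_image_of_injOn, Finset.card_range]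
    intro k hk k' hk' h
    have this := congrArg List.length h
    simp only [List.length_take] at this
    simp only [Finset.coe_range, Set.mem_Iio, Nat.lt_succ_iff] at hk hk'
    omega
  · intro y hy
    obtain ⟨k, _, rfl⟩ := Finset.mem_image.1 hy
    exact List.take_prefix k η

/-- the canonical `T₀`-node of the attach structure -/
def mkInl (V : List lam → Set ℕ) (η : List lam) : AttachCar lam V :=
  ⟨Sum.inl η, fun _ _ _ h => nomatch h⟩

@[simp] lemma mkInl_val (η : List lam) : (mkInl V η).1 = Sum.inl η := rfl

lemma mkInl_injective : Function.Injective (mkInl V) := by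
  intro a b h
  exact Sum.inl.inj (congrArg Subtype.val h)

instance : Nonempty (AttachCar lam V) := ⟨mkInl V []⟩

lemma bound_below_inl (ν : List lam) (B : Finset (AttachCar lam V))
    (hB : ∀ z ∈ B, AttachLe z.1 (Sum.inl ν)) : B.card ≤ ν.length + 1 := by
  classical
  have hval : Set.InjOn (fun z : AttachCar lam V => z.1) B := fun z _ z' _ h => Subtype.ext h
  have h2 : ∀ y ∈ B.image (fun z : AttachCar lam V => z.1), ∃ ρ, y = Sum.inl ρ ∧ ρ <+: ν := by
    intro y hy
    obtain ⟨z, hz, rfl⟩ := Finset.mem_image.1 hy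
    exact attachLe_any_inl.1 (hB z hz)
  have hkey : Set.InjOn (fun z : AttachCar lam V =>
      Sum.elim List.length (fun _ => 0) z.1) B := by
    intro z hz z' hz' h
    obtain ⟨ρ, hρ, hρν⟩ := attachLe_any_inl.1 (hB z hz)
    obtain ⟨ρ', hρ', hρν'⟩ := attachLe_any_inl.1 (hB z' hz')
    simp [hρ, hρ'] at h
    have : ρ = ρ' := by
      rw [List.prefix_iff_eq_take.1 hρν, List.prefix_iff_eq_take.1 hρν', h]
    exact Subtype.ext (by rw [hρ, hρ', this])
  calc B.card = (B.image _).card := (Finset.card_image_of_injOn hkey).symm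
    _ ≤ (Finset.range (ν.length + 1)).card := by
        apply Finset.card_le_card
        intro n hn
        obtain ⟨z, hz, rfl⟩ := Finset.mem_image.1 hn
        obtain ⟨ρ, hρ, hρν⟩ := attachLe_any_inl.1 (hB z hz)
        simp only [hρ, Sum.elim_inl]
        exact Finset.mem_range.2 (Nat.lt_succ_of_le hρν.length_le)
    _ = ν.length + 1 := Finset.card_range _

lemma bound_below_inr (ν : List lam) (m : ℕ) (t : List ℕ) (B : Finset (AttachCar lam V))
    (hB : ∀ z ∈ B, AttachLe z.1 (Sum.inr (ν, m, t))) : B.card ≤ ν.length + t.length + 1 := by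
  classical
  -- every element below is `inl ρ` with `ρ <+: ν` or `inr (ν, m, u)` with `u <+: t`, `u ≠ []`
  have hshape : ∀ z ∈ B, (∃ ρ, z.1 = Sum.inl ρ ∧ ρ <+: ν) ∨
      (∃ u, z.1 = Sum.inr (ν, m, u) ∧ u <+: t ∧ u ≠ []) := by
    intro z hz
    rcases hB z hz with (⟨_, _, _, h, _⟩ | ⟨η', ν', mv, s, hx, hy, hpre⟩ |
      ⟨η', mv, su, tu, hx, hy, hpre⟩)
    · exact absurd h (by simp)
    · obtain ⟨rfl, rfl, rfl⟩ : ν' = ν ∧ mv = m ∧ s = t := by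
        simpa [Prod.ext_iff, eq_comm] using hy
      exact Or.inl ⟨η', hx, hpre⟩
    · obtain ⟨rfl, rfl, rfl⟩ : η' = ν ∧ mv = m ∧ tu = t := by
        simpa [Prod.ext_iff, eq_comm] using hy
      exact Or.inr ⟨su, hx, hpre, (z.2 _ _ su hx).2.1⟩
  have hkey : Set.InjOn (fun z : AttachCar lam V =>
      Sum.elim List.length (fun w => ν.length + w.2.2.length) z.1) B := by
    intro z hz z' hz' h
    rcases hshape z hz with ⟨ρ, hρ, hρν⟩ | ⟨u, hu, hut, hune⟩
    · rcases hshape z' hz' with ⟨ρ', hρ', hρν'⟩ | ⟨u', hu', hut', hune'⟩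
      · simp [hρ, hρ'] at h
        have : ρ = ρ' := by
          rw [List.prefix_iff_eq_take.1 hρν, List.prefix_iff_eq_take.1 hρν', h]
        exact Subtype.ext (by rw [hρ, hρ', this])
      · simp [hρ, hu'] at h
        have h1 := hρν.length_le
        have h2 := List.length_pos_iff.2 hune'
        exfalso; omega
    · rcases hshape z' hz' with ⟨ρ', hρ', hρν'⟩ | ⟨u', hu', hut', hune'⟩
      · simp [hu, hρ'] at h
        have h1 := hρν'.length_le
        have h2 := List.length_pos_iff.2 hune
        exfalso; omega
      · simp [hu, hu'] at h
        have : u = u' := by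
          have hl : u.length = u'.length := by omega
          rw [List.prefix_iff_eq_take.1 hut, List.prefix_iff_eq_take.1 hut', hl]
        exact Subtype.ext (by rw [hu, hu', this])
  calc B.card = (B.image _).card := (Finset.card_image_of_injOn hkey).symm
    _ ≤ (Finset.range (ν.length + t.length + 1)).card := by
        apply Finset.card_le_card
        intro n hn
        obtain ⟨z, hz, rfl⟩ := Finset.mem_image.1 hn
        rcases hshape z hz with ⟨ρ, hρ, hρν⟩ | ⟨u, hu, hut, _⟩
        · simp only [hρ, Sum.elim_inl]
          exact Finset.mem_range.2 (by have := hρν.length_le; omega)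
        · simp only [hu, Sum.elim_inr]
          exact Finset.mem_range.2 (by have := hut.length_le; omega)
    _ = ν.length + t.length + 1 := Finset.card_range _

lemma bound_above_inr (ν : List lam) (m : ℕ) (t : List ℕ) (B : Finset (AttachCar lam V))
    (hB : ∀ z ∈ B, AttachLe (Sum.inr (ν, m, t)) z.1)
    (hchain : ∀ z ∈ B, ∀ z' ∈ B, AttachLe z.1 z'.1 ∨ AttachLe z'.1 z.1) : B.card ≤ m := by
  classical
  have hshape : ∀ z ∈ B, ∃ u, z.1 = Sum.inr (ν, m, u) ∧ t <+: u ∧ u ≠ [] ∧ u.length ≤ m := by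
    intro z hz
    obtain ⟨u, hu, htu⟩ := attachLe_inr_any.1 (hB z hz)
    exact ⟨u, hu, htu, (z.2 ν m u hu).2.1, (z.2 ν m u hu).2.2⟩
  have hkey : Set.InjOn (fun z : AttachCar lam V =>
      Sum.elim (fun _ => 0) (fun w => w.2.2.length) z.1) B := by
    intro z hz z' hz' h
    obtain ⟨u, hu, _, _, _⟩ := hshape z hz
    obtain ⟨u', hu', _, _, _⟩ := hshape z' hz'
    simp [hu, hu'] at h
    have hcomp : u <+: u' ∨ u' <+: u := by
      rcases hchain z hz z' hz' with hc | hc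
      · rw [hu, hu'] at hc; exact Or.inl (attachLe_inr_inr.1 hc).2.2
      · rw [hu, hu'] at hc; exact Or.inr (attachLe_inr_inr.1 hc).2.2
    have : u = u' := by
      rcases hcomp with hc | hc
      · exact hc.eq_of_length h
      · exact (hc.eq_of_length h.symm).symm
    exact Subtype.ext (by rw [hu, hu', this])
  calc B.card = (B.image _).card := (Finset.card_image_of_injOn hkey).symm
    _ ≤ (Finset.Icc 1 m).card := by
        apply Finset.card_le_card
        intro n hn
        obtain ⟨z, hz, rfl⟩ := Finset.mem_image.1 hn
        obtain ⟨u, hu, _, hune, hum⟩ := hshape z hz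
        simp only [hu, Sum.elim_inr]
        exact Finset.mem_Icc.2 ⟨List.length_pos_iff.2 hune, hum⟩
    _ = m := by simp

end Counting

section Existence
open scoped Classical
variable {lam : Type*} {V : List lam → Set ℕ}

lemma exists_below_inl (ν : List lam) :
    ∃ B : Finset (AttachCar lam V), B.card = ν.length + 1 ∧
      ∀ z ∈ B, AttachLe z.1 (Sum.inl ν) := by
  obtain ⟨B₀, hcard, hpre⟩ := list_exists_below ν
  refine ⟨B₀.image (mkInl V), ?_, ?_⟩
  · rw [Finset.card_image_of_injective _ mkInl_injective, hcard]
  · intro z hz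
    obtain ⟨y, hy, rfl⟩ := Finset.mem_image.1 hz
    simpa using hpre y hy

lemma exists_below_inr (b : AttachCar lam V) (ν : List lam) (m : ℕ) (t : List ℕ)
    (hb : b.1 = Sum.inr (ν, m, t)) :
    ∃ B : Finset (AttachCar lam V), B.card = ν.length + t.length + 1 ∧
      ∀ z ∈ B, AttachLe z.1 b.1 := by
  obtain ⟨hmV, htne, htm⟩ := b.2 ν m t hb
  have hf : ∀ k : ℕ, ∀ η' mv s, (Sum.inr (ν, m, t.take (k + 1)) :
      List lam ⊕ (List lam × ℕ × List ℕ)) = Sum.inr (η', mv, s) →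
      mv ∈ V η' ∧ s ≠ [] ∧ s.length ≤ mv := by
    intro k η' mv s h'
    obtain ⟨rfl, rfl, rfl⟩ : ν = η' ∧ m = mv ∧ t.take (k + 1) = s := by
      simpa [Prod.ext_iff] using h'
    refine ⟨hmV, ?_, ?_⟩
    · simp only [ne_eq, List.take_eq_nil_iff]
      push_neg
      exact ⟨by omega, htne⟩
    · calc (t.take (k + 1)).length ≤ t.length := by simp
        _ ≤ m := htm
  set f : ℕ → AttachCar lam V := fun k => ⟨Sum.inr (ν, m, t.take (k + 1)), hf k⟩ with hfdef
  obtain ⟨B₀, hcard, hpre⟩ := list_exists_below ν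
  have hinj : Set.InjOn f (Finset.range t.length) := by
    intro k hk k' hk' h
    have := congrArg (fun z : AttachCar lam V => Sum.elim (fun _ => 0)
      (fun w : List lam × ℕ × List ℕ => w.2.2.length) z.1) h
    simp only [hfdef, Sum.elim_inr, List.length_take] at this
    simp only [Finset.coe_range, Set.mem_Iio] at hk hk'
    omega
  have hdisj : Disjoint (B₀.image (mkInl V)) ((Finset.range t.length).image f) := by
    rw [Finset.disjoint_left]
    rintro z hz hz'
    obtain ⟨y, _, rfl⟩ := Finset.mem_image.1 hz
    obtain ⟨k, _, hk⟩ := Finset.mem_image.1 hz'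
    have := congrArg Subtype.val hk
    simp [hfdef, mkInl] at this
  refine ⟨B₀.image (mkInl V) ∪ (Finset.range t.length).image f, ?_, ?_⟩
  · rw [Finset.card_union_of_disjoint hdisj, Finset.card_image_of_injective _ mkInl_injective,
      hcard, Finset.card_image_of_injOn hinj, Finset.card_range]
    omega
  · intro z hz
    rw [hb]
    rcases Finset.mem_union.1 hz with hz | hz
    · obtain ⟨y, hy, rfl⟩ := Finset.mem_image.1 hz
      simpa using (hpre y hy).trans (List.prefix_refl ν) |>.trans (List.prefix_refl ν)
    · obtain ⟨k, _, rfl⟩ := Finset.mem_image.1 hz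
      show AttachLe (Sum.inr (ν, m, t.take (k + 1))) (Sum.inr (ν, m, t))
      exact attachLe_inr_inr.2 ⟨rfl, rfl, List.take_prefix _ _⟩

lemma exists_above_chain_inl (η : List lam) (a₀ : lam) (L : ℕ) :
    ∃ B : Finset (AttachCar lam V), B.card = L ∧ (∀ z ∈ B, AttachLe (Sum.inl η) z.1) ∧
      ∀ z ∈ B, ∀ z' ∈ B, AttachLe z.1 z'.1 ∨ AttachLe z'.1 z.1 := by
  have hrep : ∀ k k' : ℕ, k ≤ k' →
      (η ++ List.replicate k a₀) <+: (η ++ List.replicate k' a₀) := by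
    intro k k' hk
    rw [List.prefix_append_right_inj]
    refine List.prefix_iff_eq_take.2 ?_
    rw [List.take_replicate, List.length_replicate]
    congr 1
    omega
  refine ⟨(Finset.range L).image (fun k => mkInl V (η ++ List.replicate k a₀)), ?_, ?_, ?_⟩
  · rw [Finset.card_image_of_injOn, Finset.card_range]
    intro k _ k' _ h
    have := congrArg (fun z : AttachCar lam V => Sum.elim List.length (fun _ => 0) z.1) h
    simpa using this
  · intro z hz
    obtain ⟨k, _, rfl⟩ := Finset.mem_image.1 hz
    simpa using List.prefix_append η (List.replicate k a₀)
  · intro z hz z' hz'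
    obtain ⟨k, _, rfl⟩ := Finset.mem_image.1 hz
    obtain ⟨k', _, rfl⟩ := Finset.mem_image.1 hz'
    rcases le_total k k' with hk | hk
    · exact Or.inl (by simpa using hrep k k' hk)
    · exact Or.inr (by simpa using hrep k' k hk)

lemma exists_above_chain_inr (a : AttachCar lam V) (ν : List lam) (m : ℕ) (t : List ℕ)
    (ha : a.1 = Sum.inr (ν, m, t)) :
    ∃ B : Finset (AttachCar lam V), B.card = m - t.length + 1 ∧
      (∀ z ∈ B, AttachLe a.1 z.1) ∧
      ∀ z ∈ B, ∀ z' ∈ B, AttachLe z.1 z'.1 ∨ AttachLe z'.1 z.1 := by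
  obtain ⟨hmV, htne, htm⟩ := a.2 ν m t ha
  have hf : ∀ k : ℕ, ∀ η' mv s, (Sum.inr (ν, m, t ++ List.replicate (min k (m - t.length)) 0) :
      List lam ⊕ (List lam × ℕ × List ℕ)) = Sum.inr (η', mv, s) →
      mv ∈ V η' ∧ s ≠ [] ∧ s.length ≤ mv := by
    intro k η' mv s h'
    obtain ⟨rfl, rfl, rfl⟩ : ν = η' ∧ m = mv ∧ t ++ List.replicate (min k (m - t.length)) 0 = s := by
      simpa [Prod.ext_iff] using h'
    refine ⟨hmV, by simp [htne], ?_⟩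
    rw [List.length_append, List.length_replicate]
    omega
  set f : ℕ → AttachCar lam V :=
    fun k => ⟨Sum.inr (ν, m, t ++ List.replicate (min k (m - t.length)) 0), hf k⟩ with hfdef
  refine ⟨(Finset.range (m - t.length + 1)).image f, ?_, ?_, ?_⟩
  · rw [Finset.card_image_of_injOn, Finset.card_range]
    intro k hk k' hk' h
    have := congrArg (fun z : AttachCar lam V => Sum.elim (fun _ => 0)
      (fun w : List lam × ℕ × List ℕ => w.2.2.length) z.1) h
    simp only [hfdef, Sum.elim_inr, List.length_append, List.length_replicate] at this
    simp only [Finset.coe_range, Set.mem_Iio, Nat.lt_succ_iff] at hk hk'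
    omega
  · intro z hz
    obtain ⟨k, _, rfl⟩ := Finset.mem_image.1 hz
    rw [ha]
    exact attachLe_inr_inr.2 ⟨rfl, rfl, List.prefix_append _ _⟩
  · intro z hz z' hz'
    obtain ⟨k, _, rfl⟩ := Finset.mem_image.1 hz
    obtain ⟨k', _, rfl⟩ := Finset.mem_image.1 hz'
    have hrep : ∀ j j' : ℕ, j ≤ j' →
        (t ++ List.replicate j (0:ℕ)) <+: (t ++ List.replicate j' (0:ℕ)) := by
      intro j j' hj
      rw [List.prefix_append_right_inj]
      refine List.prefix_iff_eq_take.2 ?_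
      rw [List.take_replicate, List.length_replicate]
      congr 1
      omega
    rcases le_total k k' with hk | hk
    · exact Or.inl (attachLe_inr_inr.2 ⟨rfl, rfl, hrep _ _ (by omega)⟩)
    · exact Or.inr (attachLe_inr_inr.2 ⟨rfl, rfl, hrep _ _ (by omega)⟩)

end Existence

/-! ### structural facts about back-and-forth families on attach structures -/

section AttachBFF
open scoped Classical
variable {lam : Type*} {V W : List lam → Set ℕ}
  {G : Set (Finset (AttachCar lam V × AttachCar lam W))}

lemma inl_image [Nonempty lam]
    (h : IsBFF (fun x y : AttachCar lam V => AttachLe x.1 y.1)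
      (fun x y : AttachCar lam W => AttachLe x.1 y.1) G)
    {p : Finset (AttachCar lam V × AttachCar lam W)} (hp : p ∈ G)
    {x : AttachCar lam V} {y : AttachCar lam W} (hxy : (x, y) ∈ p) {η : List lam}
    (hx : x.1 = Sum.inl η) : ∃ ν, y.1 = Sum.inl ν := by
  rcases hy : y.1 with ν | z
  · exact ⟨ν, rfl⟩
  obtain ⟨ν, m, t⟩ := z
  exfalso
  obtain ⟨A, hAcard, hAle, hAchain⟩ :=
    exists_above_chain_inl (V := V) η (Classical.arbitrary lam) (m + 1)
  have hle := h.card_le_above_chain hp hxy A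
    (fun z hz => by rw [hx]; exact hAle z hz) hAchain m
    (fun B hB hBchain => bound_above_inr ν m t B (fun z hz => by rw [← hy]; exact hB z hz)
      hBchain)
  omega

lemma inl_len_le
    (h : IsBFF (fun x y : AttachCar lam V => AttachLe x.1 y.1)
      (fun x y : AttachCar lam W => AttachLe x.1 y.1) G)
    {p : Finset (AttachCar lam V × AttachCar lam W)} (hp : p ∈ G)
    {x : AttachCar lam V} {y : AttachCar lam W} (hxy : (x, y) ∈ p) {η ν : List lam}
    (hx : x.1 = Sum.inl η) (hy : y.1 = Sum.inl ν) : η.length ≤ ν.length := by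
  obtain ⟨A, hAcard, hAle⟩ := exists_below_inl (V := V) η
  have hle := h.card_le_below hp hxy A (fun z hz => by rw [hx]; exact hAle z hz)
    (ν.length + 1)
    (fun B hB => bound_below_inl ν B (fun z hz => by rw [← hy]; exact hB z hz))
  omega

end AttachBFF

/-! ### the key color transfer lemma -/

section ColorTransfer
open scoped Classical
variable {lam : Type*} [Nonempty lam] {Φ : ℕ × ℕ → ℕ} {P Q : ℕ → Set (List lam)}
  {G : Set (Finset (AttachCar lam (colorSet Φ P) × AttachCar lam (colorSet Φ Q)))}

lemma color_transfer (hΦinj : Function.Injective Φ) (hΦ0 : ∀ p, Φ p ≠ 0 ∧ Φ p ≠ 1)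
    (h : IsBFF (fun x y : AttachCar lam (colorSet Φ P) => AttachLe x.1 y.1)
      (fun x y : AttachCar lam (colorSet Φ Q) => AttachLe x.1 y.1) G)
    {q : Finset (AttachCar lam (colorSet Φ P) × AttachCar lam (colorSet Φ Q))} (hq : q ∈ G)
    {η ν : List lam} (hpair : (mkInl (colorSet Φ P) η, mkInl (colorSet Φ Q) ν) ∈ q)
    {j : ℕ} (hj : η ∈ P j) : ν ∈ Q j := by
  have hswap := h.swap
  have hqs : q.image Prod.swap ∈ _ := Set.mem_image_of_mem _ hq
  -- lengths are equal
  have hlen : η.length = ν.length := by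
    refine le_antisymm (inl_len_le h hq hpair rfl rfl) ?_
    exact inl_len_le hswap hqs (mem_image_swap.2 hpair) rfl rfl
  set m : ℕ := Φ (η.length, j) with hm
  have hm0 : m ≠ 0 := (hΦ0 _).1
  have hmV : m ∈ colorSet Φ P η := ⟨j, hj, rfl⟩
  -- the attachment node over η witnessing the color
  set a : AttachCar lam (colorSet Φ P) := ⟨Sum.inr (η, m, [0]), by
    rintro η' mv s h'
    obtain ⟨rfl, rfl, rfl⟩ : η = η' ∧ m = mv ∧ [0] = s := by simpa [Prod.ext_iff] using h'
    exact ⟨hmV, by simp, by simp; omega⟩⟩ with ha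
  -- extend to cover `a`
  obtain ⟨q₁, hq₁, hsub, ⟨b, hb⟩, -⟩ := h.2 q hq a (Classical.arbitrary _)
  have hq₁s : q₁.image Prod.swap ∈ _ := Set.mem_image_of_mem _ hq₁
  have hpair₁ := hsub hpair
  -- the image of `a` is an attachment node
  obtain ⟨ν₁, m₁, t₁, hbval⟩ : ∃ ν₁ m₁ t₁, b.1 = Sum.inr (ν₁, m₁, t₁) := by
    rcases hbv : b.1 with ρ | z
    · exfalso
      obtain ⟨η', ha'⟩ := inl_image hswap hq₁s (mem_image_swap.2 hb) hbv
      rw [ha] at ha'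
      exact absurd ha' (by simp)
    · obtain ⟨ν₁, m₁, t₁⟩ := z; exact ⟨ν₁, m₁, t₁, rfl⟩
  obtain ⟨hm₁W, ht₁ne, ht₁len⟩ := b.2 ν₁ m₁ t₁ hbval
  -- `ν <+: ν₁`
  have hνν₁ : ν <+: ν₁ := by
    have h1 : AttachLe (Sum.inl η : List lam ⊕ (List lam × ℕ × List ℕ))
        (Sum.inr (η, m, [0])) := attachLe_inl_inr.2 (List.prefix_refl η)
    have h2 := ((h.1 q₁ hq₁).2.2 _ _ _ _ hpair₁ hb).1 h1
    have h3 : AttachLe (Sum.inl ν : List lam ⊕ (List lam × ℕ × List ℕ))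
        (Sum.inr (ν₁, m₁, t₁)) := by rw [← hbval]; exact h2
    exact attachLe_inl_inr.1 h3
  -- counting nodes below `a` and `b`
  have hcount1 : η.length + 2 ≤ ν₁.length + t₁.length + 1 := by
    obtain ⟨A, hAcard, hAle⟩ := exists_below_inr a η m [0] rfl
    have := h.card_le_below hq₁ hb A hAle (ν₁.length + t₁.length + 1)
      (fun B hB => bound_below_inr ν₁ m₁ t₁ B (fun z hz => by rw [← hbval]; exact hB z hz))
    simp at hAcard
    omega
  have hcount2 : ν₁.length + t₁.length + 1 ≤ η.length + 2 := by
    obtain ⟨A, hAcard, hAle⟩ := exists_below_inr b ν₁ m₁ t₁ hbval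
    have := hswap.card_le_below hq₁s (mem_image_swap.2 hb) A hAle (η.length + 1 + 1)
      (fun B hB => by
        have := bound_below_inr η m [0] B (fun z hz => by
          have := hB z hz
          exact this)
        simpa using this)
    omega
  have ht₁1 : t₁.length = 1 := by
    have h1 := List.length_pos_iff.2 ht₁ne
    have h2 := hνν₁.length_le
    omega
  have hν₁ : ν₁ = ν := by
    refine (hνν₁.eq_of_length ?_).symm
    omega
  -- `m = m₁` via chains above
  have hmm₁ : m = m₁ := by
    have hle1 : m ≤ m₁ := by
      obtain ⟨A, hAcard, hAle, hAchain⟩ := exists_above_chain_inr a η m [0] rfl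
      have := h.card_le_above_chain hq₁ hb A hAle hAchain m₁
        (fun B hB hBchain => bound_above_inr ν₁ m₁ t₁ B
          (fun z hz => by rw [← hbval]; exact hB z hz) hBchain)
      simp at hAcard
      omega
    have hle2 : m₁ ≤ m := by
      obtain ⟨A, hAcard, hAle, hAchain⟩ := exists_above_chain_inr b ν₁ m₁ t₁ hbval
      have := hswap.card_le_above_chain hq₁s (mem_image_swap.2 hb) A hAle hAchain m
        (fun B hB hBchain => bound_above_inr η m [0] B
          (fun z hz => by have := hB z hz; exact this) hBchain)
      omega
    omega
  -- conclude
  obtain ⟨j', hj', hΦj'⟩ := hm₁W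
  have : (ν₁.length, j') = (η.length, j) := hΦinj (by rw [hΦj', ← hmm₁, hm])
  have hj'j : j' = j := by
    have := congrArg Prod.snd this
    simpa using this
  rw [← hν₁, ← hj'j]
  exact hj'

end ColorTransfer

/-! ### length preservation for prefix back-and-forth families -/

section PrefLen
open scoped Classical
variable {α β : Type*}

lemma pref_len_le {F : Set (Finset (List α × List β))}
    (h : IsBFF (fun x y : List α => x <+: y) (fun x y : List β => x <+: y) F)
    {p : Finset (List α × List β)} (hp : p ∈ F) {η : List α} {ν : List β}
    (hab : (η, ν) ∈ p) : η.length ≤ ν.length := by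
  obtain ⟨A, hAcard, hAle⟩ := list_exists_below η
  have := h.card_le_below hp hab A hAle (ν.length + 1) (fun B hB => list_bound_below ν B hB)
  omega

lemma pref_len_eq {F : Set (Finset (List α × List β))}
    (h : IsBFF (fun x y : List α => x <+: y) (fun x y : List β => x <+: y) F)
    {p : Finset (List α × List β)} (hp : p ∈ F) {η : List α} {ν : List β}
    (hab : (η, ν) ∈ p) : η.length = ν.length := by
  refine le_antisymm (pref_len_le h hp hab) ?_
  exact pref_len_le h.swap (Set.mem_image_of_mem _ hp) (mem_image_swap.2 hab)

end PrefLen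

/-! ### part (ii), forward direction -/

section Forward
open scoped Classical
variable {lam : Type*} {Φ : ℕ × ℕ → ℕ} {P Q : ℕ → Set (List lam)}

/-- the family of partial isomorphisms of the attached trees induced by a family of
colored partial isomorphisms -/
def liftFam (Φ : ℕ × ℕ → ℕ) (P Q : ℕ → Set (List lam))
    (F : Set (Finset (List lam × List lam))) :
    Set (Finset (AttachCar lam (colorSet Φ P) × AttachCar lam (colorSet Φ Q))) :=
  {q' | ∃ p ∈ F, ∀ x y, (x, y) ∈ q' →
    (∃ η ν, x.1 = Sum.inl η ∧ y.1 = Sum.inl ν ∧ (η, ν) ∈ p) ∨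
    (∃ η ν m s, x.1 = Sum.inr (η, m, s) ∧ y.1 = Sum.inr (ν, m, s) ∧ (η, ν) ∈ p)}

theorem forward_dir (h : ColBackForth P Q) :
    BackForth (fun x y : AttachCar lam (colorSet Φ P) => AttachLe x.1 y.1)
      (fun x y : AttachCar lam (colorSet Φ Q) => AttachLe x.1 y.1) := by
  obtain ⟨F, hFne, hFiso, hFext⟩ := h
  have hBFF : IsBFF (fun x y : List lam => x <+: y) (fun x y : List lam => x <+: y) F :=
    ⟨fun p hp => ⟨(hFiso p hp).1, (hFiso p hp).2.1, (hFiso p hp).2.2.1⟩, hFext⟩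
  have hlen : ∀ p ∈ F, ∀ η ν : List lam, (η, ν) ∈ p → η.length = ν.length :=
    fun p hp η ν hmem => pref_len_eq hBFF hp hmem
  -- a single extension step on the domain side
  have hext_dom : ∀ q' ∈ liftFam Φ P Q F, ∀ a, ∃ q'' ∈ liftFam Φ P Q F, q' ⊆ q'' ∧
      ∃ b', (a, b') ∈ q'' := by
    rintro q' ⟨p, hp, hcond⟩ a
    rcases haval : a.1 with η | z
    · obtain ⟨p₁, hp₁, hsub, ⟨ν, hν⟩, -⟩ := hFext p hp η []
      refine ⟨insert (a, mkInl _ ν) q', ⟨p₁, hp₁, ?_⟩, Finset.subset_insert _ _,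
        ⟨mkInl _ ν, Finset.mem_insert_self _ _⟩⟩
      intro x y hxy
      rcases Finset.mem_insert.1 hxy with heq | hxy
      · obtain ⟨rfl, rfl⟩ : x = a ∧ y = mkInl _ ν := by
          constructor <;> [exact congrArg Prod.fst heq; exact congrArg Prod.snd heq]
        exact Or.inl ⟨η, ν, haval, rfl, hν⟩
      · rcases hcond x y hxy with ⟨η', ν', h1, h2, h3⟩ | ⟨η', ν', m', s', h1, h2, h3⟩
        · exact Or.inl ⟨η', ν', h1, h2, hsub h3⟩
        · exact Or.inr ⟨η', ν', m', s', h1, h2, hsub h3⟩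
    · obtain ⟨η, m, s⟩ := z
      obtain ⟨hmV, hsne, hsm⟩ := a.2 η m s haval
      obtain ⟨p₁, hp₁, hsub, ⟨ν, hν⟩, -⟩ := hFext p hp η []
      obtain ⟨j, hjP, hΦeq⟩ := hmV
      have hjQ : ν ∈ Q j := ((hFiso p₁ hp₁).2.2.2 η ν hν j).1 hjP
      have hmW : m ∈ colorSet Φ Q ν := ⟨j, hjQ, by rw [← hlen p₁ hp₁ η ν hν, hΦeq]⟩
      set b' : AttachCar lam (colorSet Φ Q) := ⟨Sum.inr (ν, m, s), by
        rintro η' mv s' h'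
        obtain ⟨rfl, rfl, rfl⟩ : ν = η' ∧ m = mv ∧ s = s' := by simpa [Prod.ext_iff] using h'
        exact ⟨hmW, hsne, hsm⟩⟩ with hb'
      refine ⟨insert (a, b') q', ⟨p₁, hp₁, ?_⟩, Finset.subset_insert _ _,
        ⟨b', Finset.mem_insert_self _ _⟩⟩
      intro x y hxy
      rcases Finset.mem_insert.1 hxy with heq | hxy
      · obtain ⟨rfl, rfl⟩ : x = a ∧ y = b' := by
          constructor <;> [exact congrArg Prod.fst heq; exact congrArg Prod.snd heq]
        exact Or.inr ⟨η, ν, m, s, haval, rfl, hν⟩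
      · rcases hcond x y hxy with ⟨η', ν', h1, h2, h3⟩ | ⟨η', ν', m', s', h1, h2, h3⟩
        · exact Or.inl ⟨η', ν', h1, h2, hsub h3⟩
        · exact Or.inr ⟨η', ν', m', s', h1, h2, hsub h3⟩
  -- a single extension step on the range side
  have hext_ran : ∀ q' ∈ liftFam Φ P Q F, ∀ b, ∃ q'' ∈ liftFam Φ P Q F, q' ⊆ q'' ∧
      ∃ a', (a', b) ∈ q'' := by
    rintro q' ⟨p, hp, hcond⟩ b
    rcases hbval : b.1 with ν | z
    · obtain ⟨p₁, hp₁, hsub, -, ⟨η, hη⟩⟩ := hFext p hp [] ν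
      refine ⟨insert (mkInl _ η, b) q', ⟨p₁, hp₁, ?_⟩, Finset.subset_insert _ _,
        ⟨mkInl _ η, Finset.mem_insert_self _ _⟩⟩
      intro x y hxy
      rcases Finset.mem_insert.1 hxy with heq | hxy
      · obtain ⟨rfl, rfl⟩ : x = mkInl _ η ∧ y = b := by
          constructor <;> [exact congrArg Prod.fst heq; exact congrArg Prod.snd heq]
        exact Or.inl ⟨η, ν, rfl, hbval, hη⟩
      · rcases hcond x y hxy with ⟨η', ν', h1, h2, h3⟩ | ⟨η', ν', m', s', h1, h2, h3⟩
        · exact Or.inl ⟨η', ν', h1, h2, hsub h3⟩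
        · exact Or.inr ⟨η', ν', m', s', h1, h2, hsub h3⟩
    · obtain ⟨ν, m, s⟩ := z
      obtain ⟨hmW, hsne, hsm⟩ := b.2 ν m s hbval
      obtain ⟨p₁, hp₁, hsub, -, ⟨η, hη⟩⟩ := hFext p hp [] ν
      obtain ⟨j, hjQ, hΦeq⟩ := hmW
      have hjP : η ∈ P j := ((hFiso p₁ hp₁).2.2.2 η ν hη j).2 hjQ
      have hmV : m ∈ colorSet Φ P η := ⟨j, hjP, by rw [hlen p₁ hp₁ η ν hη, hΦeq]⟩
      set a' : AttachCar lam (colorSet Φ P) := ⟨Sum.inr (η, m, s), by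
        rintro η' mv s' h'
        obtain ⟨rfl, rfl, rfl⟩ : η = η' ∧ m = mv ∧ s = s' := by simpa [Prod.ext_iff] using h'
        exact ⟨hmV, hsne, hsm⟩⟩ with ha'
      refine ⟨insert (a', b) q', ⟨p₁, hp₁, ?_⟩, Finset.subset_insert _ _,
        ⟨a', Finset.mem_insert_self _ _⟩⟩
      intro x y hxy
      rcases Finset.mem_insert.1 hxy with heq | hxy
      · obtain ⟨rfl, rfl⟩ : x = a' ∧ y = b := by
          constructor <;> [exact congrArg Prod.fst heq; exact congrArg Prod.snd heq]
        exact Or.inr ⟨η, ν, m, s, rfl, hbval, hη⟩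
      · rcases hcond x y hxy with ⟨η', ν', h1, h2, h3⟩ | ⟨η', ν', m', s', h1, h2, h3⟩
        · exact Or.inl ⟨η', ν', h1, h2, hsub h3⟩
        · exact Or.inr ⟨η', ν', m', s', h1, h2, hsub h3⟩
  obtain ⟨p₀, hp₀⟩ := hFne
  refine ⟨liftFam Φ P Q F, ⟨∅, ⟨p₀, hp₀, by simp⟩⟩, ?_, ?_⟩
  · -- partial isomorphism conditions
    rintro q' ⟨p, hp, hcond⟩
    obtain ⟨hfun, hinj, hiso, -⟩ := hFiso p hp
    refine ⟨?_, ?_, ?_⟩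
    · intro x y y' hxy hxy'
      rcases hcond x y hxy with ⟨η, ν, h1, h2, h3⟩ | ⟨η, ν, m, s, h1, h2, h3⟩ <;>
        rcases hcond x y' hxy' with ⟨η', ν', h1', h2', h3'⟩ | ⟨η', ν', m', s', h1', h2', h3'⟩
      · obtain rfl : η = η' := by rw [h1] at h1'; exact Sum.inl.inj h1'
        exact Subtype.ext (by rw [h2, h2', hfun η ν ν' h3 h3'])
      · rw [h1] at h1'; exact absurd h1' (by simp)
      · rw [h1] at h1'; exact absurd h1' (by simp)
      · obtain ⟨rfl, rfl, rfl⟩ : η = η' ∧ m = m' ∧ s = s' := by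
          rw [h1] at h1'; simpa [Prod.ext_iff] using h1'
        exact Subtype.ext (by rw [h2, h2', hfun η ν ν' h3 h3'])
    · intro x x' y hxy hxy'
      rcases hcond x y hxy with ⟨η, ν, h1, h2, h3⟩ | ⟨η, ν, m, s, h1, h2, h3⟩ <;>
        rcases hcond x' y hxy' with ⟨η', ν', h1', h2', h3'⟩ | ⟨η', ν', m', s', h1', h2', h3'⟩
      · obtain rfl : ν = ν' := by rw [h2] at h2'; exact Sum.inl.inj h2'
        exact Subtype.ext (by rw [h1, h1', hinj η η' ν h3 h3'])
      · rw [h2] at h2'; exact absurd h2' (by simp)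
      · rw [h2] at h2'; exact absurd h2' (by simp)
      · obtain ⟨rfl, rfl, rfl⟩ : ν = ν' ∧ m = m' ∧ s = s' := by
          rw [h2] at h2'; simpa [Prod.ext_iff] using h2'
        exact Subtype.ext (by rw [h1, h1', hinj η η' ν h3 h3'])
    · intro x y x' y' hxy hxy'
      show AttachLe x.1 x'.1 ↔ AttachLe y.1 y'.1
      have hηνiff : ∀ η ν η' ν' : List lam, (η, ν) ∈ p → (η', ν') ∈ p → (η = η' ↔ ν = ν') := by
        intro η ν η' ν' hm hm'
        constructor
        · rintro rfl; exact hfun η ν ν' hm hm'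
        · rintro rfl; exact hinj η η' ν hm hm'
      rcases hcond x y hxy with ⟨η, ν, h1, h2, h3⟩ | ⟨η, ν, m, s, h1, h2, h3⟩ <;>
        rcases hcond x' y' hxy' with ⟨η', ν', h1', h2', h3'⟩ | ⟨η', ν', m', s', h1', h2', h3'⟩
      · rw [h1, h1', h2, h2']
        simpa using hiso η ν η' ν' h3 h3'
      · rw [h1, h1', h2, h2']
        simpa using hiso η ν η' ν' h3 h3'
      · rw [h1, h1', h2, h2']
        simp
      · rw [h1, h1', h2, h2']
        simp only [attachLe_inr_inr]
        rw [hηνiff η ν η' ν' h3 h3']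
  · -- extension
    rintro q' hq' a b
    obtain ⟨q₁, hq₁, hsub₁, ⟨b', hb'⟩⟩ := hext_dom q' hq' a
    obtain ⟨q₂, hq₂, hsub₂, ⟨a', ha'⟩⟩ := hext_ran q₁ hq₁ b
    exact ⟨q₂, hq₂, hsub₁.trans hsub₂, ⟨b', hsub₂ hb'⟩, ⟨a', ha'⟩⟩

end Forward

/-! ### part (ii), backward direction -/

section Backward
open scoped Classical
variable {lam : Type*} [Nonempty lam] {Φ : ℕ × ℕ → ℕ} {P Q : ℕ → Set (List lam)}

theorem backward_dir (hΦinj : Function.Injective Φ) (hΦ0 : ∀ p, Φ p ≠ 0 ∧ Φ p ≠ 1)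
    (h : BackForth (fun x y : AttachCar lam (colorSet Φ P) => AttachLe x.1 y.1)
      (fun x y : AttachCar lam (colorSet Φ Q) => AttachLe x.1 y.1)) :
    ColBackForth P Q := by
  obtain ⟨G, hGne, hGiso, hGext⟩ := h
  have hBFF : IsBFF (fun x y : AttachCar lam (colorSet Φ P) => AttachLe x.1 y.1)
      (fun x y : AttachCar lam (colorSet Φ Q) => AttachLe x.1 y.1) G := ⟨hGiso, hGext⟩
  have hswap := hBFF.swap
  set F : Set (Finset (List lam × List lam)) :=
    {p | ∃ q ∈ G, ∀ η ν : List lam, (η, ν) ∈ p →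
      (mkInl (colorSet Φ P) η, mkInl (colorSet Φ Q) ν) ∈ q} with hF
  obtain ⟨q₀, hq₀⟩ := hGne
  refine ⟨F, ⟨∅, ⟨q₀, hq₀, by simp⟩⟩, ?_, ?_⟩
  · rintro p ⟨q, hq, hcond⟩
    obtain ⟨hfun, hinj, hiso⟩ := hGiso q hq
    refine ⟨?_, ?_, ?_, ?_⟩
    · intro η ν ν' hm hm'
      exact mkInl_injective (hfun _ _ _ (hcond _ _ hm) (hcond _ _ hm'))
    · intro η η' ν hm hm'
      exact mkInl_injective (hinj _ _ _ (hcond _ _ hm) (hcond _ _ hm'))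
    · intro η ν η' ν' hm hm'
      have := hiso _ _ _ _ (hcond _ _ hm) (hcond _ _ hm')
      simpa using this
    · intro η ν hm j
      constructor
      · intro hj
        exact color_transfer hΦinj hΦ0 hBFF hq (hcond _ _ hm) hj
      · intro hj
        exact color_transfer (P := Q) (Q := P) hΦinj hΦ0 hswap
          (Set.mem_image_of_mem _ hq) (mem_image_swap.2 (hcond _ _ hm)) hj
  · rintro p ⟨q, hq, hcond⟩ a b
    obtain ⟨q₁, hq₁, hsub, ⟨y, hy⟩, ⟨x, hx⟩⟩ :=
      hGext q hq (mkInl (colorSet Φ P) a) (mkInl (colorSet Φ Q) b)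
    obtain ⟨b₀, hb₀⟩ := inl_image hBFF hq₁ hy (rfl : (mkInl (colorSet Φ P) a).1 = Sum.inl a)
    obtain ⟨a₀, ha₀⟩ := inl_image hswap (Set.mem_image_of_mem _ hq₁) (mem_image_swap.2 hx)
      (rfl : (mkInl (colorSet Φ Q) b).1 = Sum.inl b)
    have hy' : y = mkInl (colorSet Φ Q) b₀ := Subtype.ext hb₀
    have hx' : x = mkInl (colorSet Φ P) a₀ := Subtype.ext ha₀
    refine ⟨insert (a, b₀) (insert (a₀, b) p), ⟨q₁, hq₁, ?_⟩, ?_, ?_, ?_⟩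
    · intro η ν hm
      rcases Finset.mem_insert.1 hm with heq | hm
      · obtain ⟨rfl, rfl⟩ : η = a ∧ ν = b₀ := by
          constructor <;> [exact congrArg Prod.fst heq; exact congrArg Prod.snd heq]
        rwa [hy'] at hy
      rcases Finset.mem_insert.1 hm with heq | hm
      · obtain ⟨rfl, rfl⟩ : η = a₀ ∧ ν = b := by
          constructor <;> [exact congrArg Prod.fst heq; exact congrArg Prod.snd heq]
        rwa [hx'] at hx
      · exact hsub (hcond _ _ hm)
    · intro z hz
      exact Finset.mem_insert.2 (Or.inr (Finset.mem_insert.2 (Or.inr hz)))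
    · exact ⟨b₀, Finset.mem_insert_self _ _⟩
    · exact ⟨a₀, Finset.mem_insert.2 (Or.inr (Finset.mem_insert_self _ _))⟩

end Backward

/-! ### part (i): encoding the attach structure as a special subtree -/

section Encoding
open scoped Classical
variable {α β : Type*}

lemma map_prefix_iff {f : α → β} (hf : Function.Injective f) {l l' : List α} :
    l.map f <+: l'.map f ↔ l <+: l' := by
  constructor
  · intro h
    have h1 := List.prefix_iff_eq_take.1 h
    rw [List.length_map, ← List.map_take] at h1
    have h2 := (List.map_injective_iff.2 hf) h1
    exact List.prefix_iff_eq_take.2 h2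
  · exact fun h => h.map f

variable (lam : Type*) [Infinite lam]

def cEmb : ℕ ↪ lam := Infinite.natEmbedding lam

def wFun (a : lam) : lam :=
  if h : ∃ n, cEmb lam n = a then cEmb lam (2 * h.choose + 1) else a

def dFun (n : ℕ) : lam := cEmb lam (2 * n)

lemma dFun_inj : Function.Injective (dFun lam) := by
  intro n n' h
  have := (cEmb lam).injective h
  omega

lemma wFun_ne_dFun (a : lam) (n : ℕ) : wFun lam a ≠ dFun lam n := by
  unfold wFun dFun
  split_ifs with h
  · intro heq
    have := (cEmb lam).injective heq
    omega
  · intro heq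
    exact h ⟨2 * n, heq.symm⟩

lemma wFun_inj : Function.Injective (wFun lam) := by
  intro a a' heq
  unfold wFun at heq
  split_ifs at heq with h h' h'
  · have h1 := (cEmb lam).injective heq
    rw [← h.choose_spec, ← h'.choose_spec]
    congr 1
    omega
  · exact absurd ⟨_, heq⟩ h'
  · exact absurd ⟨_, heq.symm⟩ h
  · exact heq

def codeFun (m : ℕ) : List ℕ → List lam
  | [] => []
  | a :: t => dFun lam (Nat.pair m a) :: t.map (dFun lam)

@[simp] lemma codeFun_nil (m : ℕ) : codeFun lam m [] = [] := rfl

@[simp] lemma codeFun_length (m : ℕ) (s : List ℕ) : (codeFun lam m s).length = s.length := by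
  cases s <;> simp [codeFun]

lemma codeFun_mem (m : ℕ) (s : List ℕ) : ∀ x ∈ codeFun lam m s, ∃ n, x = dFun lam n := by
  cases s with
  | nil => simp
  | cons a t =>
    intro x hx
    rcases List.mem_cons.1 hx with rfl | hx
    · exact ⟨_, rfl⟩
    · obtain ⟨n, _, rfl⟩ := List.mem_map.1 hx
      exact ⟨n, rfl⟩

lemma codeFun_eq_nil_iff (m : ℕ) (s : List ℕ) : codeFun lam m s = [] ↔ s = [] := by
  cases s <;> simp [codeFun]

lemma codeFun_take (m : ℕ) (s : List ℕ) (k : ℕ) :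
    (codeFun lam m s).take k = codeFun lam m (s.take k) := by
  cases s with
  | nil => simp
  | cons a t =>
    cases k with
    | zero => simp
    | succ k => simp [codeFun, List.map_take]

lemma codeFun_prefix_iff (m m' : ℕ) (s t : List ℕ) (hs : s ≠ []) (ht : t ≠ []) :
    codeFun lam m s <+: codeFun lam m' t ↔ m = m' ∧ s <+: t := by
  obtain ⟨a, s', rfl⟩ := List.exists_cons_of_ne_nil hs
  obtain ⟨b, t', rfl⟩ := List.exists_cons_of_ne_nil ht
  simp only [codeFun, List.cons_prefix_cons]
  constructor
  · rintro ⟨h1, h2⟩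
    obtain ⟨rfl, rfl⟩ := Nat.pair_eq_pair.1 (dFun_inj lam h1)
    exact ⟨rfl, by simp [(map_prefix_iff (dFun_inj lam)).1 h2]⟩
  · rintro ⟨rfl, h2⟩
    exact ⟨by rw [h2.1], (h2.2.map _)⟩

lemma enc_split (ν₁ ν₂ : List lam) (r₁ r₂ : List lam)
    (h₁ : ∀ x ∈ r₁, ∃ n, x = dFun lam n) (h₂ : ∀ x ∈ r₂, ∃ n, x = dFun lam n) :
    ν₁.map (wFun lam) ++ r₁ <+: ν₂.map (wFun lam) ++ r₂ ↔
      (r₁ = [] ∧ ν₁ <+: ν₂) ∨ (ν₁ = ν₂ ∧ r₁ <+: r₂) := by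
  constructor
  · intro h
    have hA₁ : ν₁.map (wFun lam) <+: ν₂.map (wFun lam) ++ r₂ :=
      (List.prefix_append _ r₁).trans h
    rcases Nat.lt_trichotomy ν₁.length ν₂.length with hlt | heq | hgt
    · rcases hr₁ : r₁ with _ | ⟨x, r₁'⟩
      · refine Or.inl ⟨rfl, ?_⟩
        have hAA := List.prefix_of_prefix_length_le hA₁ (List.prefix_append _ _)
          (by simp; omega)
        exact (map_prefix_iff (wFun_inj lam)).1 hAA
      · exfalso
        subst hr₁
        have hbig : (ν₁.map (wFun lam) ++ [x]) <+: ν₂.map (wFun lam) ++ r₂ := by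
          refine List.IsPrefix.trans ?_ h
          rw [show ν₁.map (wFun lam) ++ x :: r₁' = (ν₁.map (wFun lam) ++ [x]) ++ r₁' by simp]
          exact List.prefix_append _ _
        have hx : (ν₁.map (wFun lam) ++ [x]) <+: ν₂.map (wFun lam) :=
          List.prefix_of_prefix_length_le hbig (List.prefix_append _ _) (by simp; omega)
        have hxmem : x ∈ ν₂.map (wFun lam) := hx.sublist.subset (by simp)
        obtain ⟨a, -, ha⟩ := List.mem_map.1 hxmem
        obtain ⟨n, rfl⟩ := h₁ x (by simp)
        exact wFun_ne_dFun lam a n ha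
    · right
      have hAA := List.prefix_of_prefix_length_le hA₁ (List.prefix_append _ _)
        (by simp [heq])
      have hνν : ν₁ = ν₂ := (List.map_injective_iff.2 (wFun_inj lam))
        (hAA.eq_of_length (by simp [heq]))
      subst hνν
      refine ⟨rfl, ?_⟩
      rwa [List.prefix_append_right_inj] at h
    · exfalso
      have hlenle := hA₁.length_le
      simp only [List.length_append, List.length_map] at hlenle
      rcases hr₂ : r₂ with _ | ⟨y, r₂'⟩
      · subst hr₂; simp at hlenle; omega
      · subst hr₂
        have hy : (ν₂.map (wFun lam) ++ [y]) <+: ν₁.map (wFun lam) := by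
          refine List.prefix_of_prefix_length_le ?_ hA₁ (by simp; omega)
          rw [show ν₂.map (wFun lam) ++ y :: r₂' = (ν₂.map (wFun lam) ++ [y]) ++ r₂' by simp]
          exact List.prefix_append _ _
        have hymem : y ∈ ν₁.map (wFun lam) := hy.sublist.subset (by simp)
        obtain ⟨a, -, ha⟩ := List.mem_map.1 hymem
        obtain ⟨n, rfl⟩ := h₂ y (by simp)
        exact wFun_ne_dFun lam a n ha
  · rintro (⟨rfl, hpre⟩ | ⟨rfl, hpre⟩)
    · simpa using (hpre.map (wFun lam)).trans (List.prefix_append _ r₂)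
    · rwa [List.prefix_append_right_inj]

end Encoding

section Encoding2
open scoped Classical
variable (lam : Type*) [Infinite lam] (V : List lam → Set ℕ)

def encFun : (List lam ⊕ (List lam × ℕ × List ℕ)) → List lam :=
  Sum.elim (fun η => η.map (wFun lam))
    (fun z => z.1.map (wFun lam) ++ codeFun lam z.2.1 z.2.2)

@[simp] lemma encFun_inl (η : List lam) : encFun lam (Sum.inl η) = η.map (wFun lam) := rfl

@[simp] lemma encFun_inr (η : List lam) (m : ℕ) (s : List ℕ) :
    encFun lam (Sum.inr (η, m, s)) = η.map (wFun lam) ++ codeFun lam m s := rfl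

variable {lam}

lemma enc_le_iff {V : List lam → Set ℕ} (x y : AttachCar lam V) :
    AttachLe x.1 y.1 ↔ encFun lam x.1 <+: encFun lam y.1 := by
  rcases hx : x.1 with η | ⟨η, m, s⟩ <;> rcases hy : y.1 with ν | ⟨ν, m', t⟩
  · simp only [attachLe_inl_inl, encFun_inl]
    exact (map_prefix_iff (wFun_inj lam)).symm
  · simp only [attachLe_inl_inr, encFun_inl, encFun_inr]
    have hsplit := enc_split lam η ν [] (codeFun lam m' t) (by simp) (codeFun_mem lam m' t)
    rw [List.append_nil] at hsplit
    rw [hsplit]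
    constructor
    · intro h; exact Or.inl ⟨rfl, h⟩
    · rintro (⟨-, h⟩ | ⟨rfl, -⟩)
      · exact h
      · exact List.prefix_refl _
  · obtain ⟨-, hsne, -⟩ := x.2 η m s hx
    simp only [attachLe_inr_inl, encFun_inl, encFun_inr, false_iff]
    intro hcon
    have hsplit := enc_split lam η ν (codeFun lam m s) [] (codeFun_mem lam m s) (by simp)
    rw [List.append_nil] at hsplit
    rcases hsplit.1 hcon with ⟨hnil, -⟩ | ⟨-, hpre⟩
    · exact hsne ((codeFun_eq_nil_iff lam m s).1 hnil)
    · exact hsne ((codeFun_eq_nil_iff lam m s).1 (List.prefix_nil.1 hpre))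
  · obtain ⟨-, hsne, -⟩ := x.2 η m s hx
    obtain ⟨-, htne, -⟩ := y.2 ν m' t hy
    simp only [attachLe_inr_inr, encFun_inr]
    rw [enc_split lam η ν _ _ (codeFun_mem lam m s) (codeFun_mem lam m' t)]
    constructor
    · rintro ⟨rfl, rfl, hpre⟩
      exact Or.inr ⟨rfl, (codeFun_prefix_iff lam m m s t hsne htne).2 ⟨rfl, hpre⟩⟩
    · rintro (⟨hnil, -⟩ | ⟨rfl, hpre⟩)
      · exact absurd ((codeFun_eq_nil_iff lam m s).1 hnil) hsne
      · obtain ⟨rfl, hst⟩ := (codeFun_prefix_iff lam m m' s t hsne htne).1 hpre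
        exact ⟨rfl, rfl, hst⟩

lemma attachLe_antisymm {V : List lam → Set ℕ} (x y : AttachCar lam V)
    (h1 : AttachLe x.1 y.1) (h2 : AttachLe y.1 x.1) : x = y := by
  rcases hx : x.1 with η | ⟨η, m, s⟩ <;> rcases hy : y.1 with ν | ⟨ν, m', t⟩ <;>
    rw [hx, hy] at h1 h2
  · rw [attachLe_inl_inl] at h1 h2
    exact Subtype.ext (by rw [hx, hy, h1.eq_of_length (le_antisymm h1.length_le h2.length_le)])
  · exact absurd h2 (by simp)
  · exact absurd h1 (by simp)
  · rw [attachLe_inr_inr] at h1 h2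
    obtain ⟨rfl, rfl, hst⟩ := h1
    obtain ⟨-, -, hts⟩ := h2
    exact Subtype.ext (by
      rw [hx, hy, hst.eq_of_length (le_antisymm hst.length_le hts.length_le)])

lemma enc_inj {V : List lam → Set ℕ} :
    Function.Injective (fun x : AttachCar lam V => encFun lam x.1) := by
  intro x y h
  simp only at h
  exact attachLe_antisymm x y ((enc_le_iff x y).2 (h ▸ List.prefix_refl _))
    ((enc_le_iff y x).2 (h ▸ List.prefix_refl _))

lemma ofFn_prefix {α : Type*} (f : ℕ → α) {k n : ℕ} (h : k ≤ n) :
    (List.ofFn fun i : Fin k => f i) <+: (List.ofFn fun i : Fin n => f i) := by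
  refine List.prefix_iff_eq_take.2 ?_
  apply List.ext_getElem
  · simp only [List.length_ofFn, List.length_take]
    omega
  · intro i h1 h2
    simp only [List.getElem_ofFn, List.getElem_take]

end Encoding2

/-! ### subtree, specialness, and assembly of part (i) -/

section PartOne
open scoped Classical
variable {lam : Type*} [Infinite lam]

lemma part_one (V : List lam → Set ℕ) (hV2 : ∀ η m, m ∈ V η → 2 ≤ m) :
    ∃ T : Set (List lam), IsSubtree T ∧ IsSpecial T ∧
      ∃ e : AttachCar lam V ≃ {l : List lam // l ∈ T},
        ∀ x y : AttachCar lam V, AttachLe x.1 y.1 ↔ (e x).1 <+: (e y).1 := by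
  set T : Set (List lam) := Set.range (fun x : AttachCar lam V => encFun lam x.1) with hT
  have henc_len : ∀ (η : List lam) (m : ℕ) (s : List ℕ),
      (encFun lam (Sum.inr (η, m, s))).length = η.length + s.length := by
    intro η m s
    simp [encFun]
  -- closure under prefixes
  have hclosed : ∀ l ∈ T, ∀ l', l' <+: l → l' ∈ T := by
    rintro l ⟨x, hx⟩ l' hpre
    simp only at hx
    subst hx
    rcases hxv : x.1 with η | ⟨η, m, s⟩
    · rw [hxv, encFun_inl] at hpre
      refine ⟨mkInl V (η.take l'.length), ?_⟩
      simp only [mkInl_val, encFun_inl]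
      rw [List.map_take]
      exact (List.prefix_iff_eq_take.1 hpre).symm
    · obtain ⟨hmV, hsne, hsm⟩ := x.2 η m s hxv
      rw [hxv, encFun_inr] at hpre
      have htake := List.prefix_iff_eq_take.1 hpre
      rw [List.take_append] at htake
      by_cases hk : l'.length ≤ η.length
      · have h0 : l'.length - (List.map (wFun lam) η).length = 0 := by
          simp only [List.length_map]
          omega
        rw [h0, List.take_zero, List.append_nil, ← List.map_take] at htake
        exact ⟨mkInl V (η.take l'.length), htake.symm⟩
      · push_neg at hk
        have h1 : (List.map (wFun lam) η).take l'.length = List.map (wFun lam) η := by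
          apply List.take_of_length_le
          simp only [List.length_map]
          omega
        rw [h1, codeFun_take] at htake
        have hk1 : 1 ≤ l'.length - (List.map (wFun lam) η).length := by
          simp only [List.length_map]
          omega
        refine ⟨⟨Sum.inr (η, m, s.take (l'.length - (List.map (wFun lam) η).length)), ?_⟩,
          htake.symm⟩
        rintro η' mv s' h'
        obtain ⟨rfl, rfl, rfl⟩ : η = η' ∧ m = mv ∧
            s.take (l'.length - (List.map (wFun lam) η).length) = s' := by
          simpa [Prod.ext_iff] using h'
        refine ⟨hmV, ?_, ?_⟩
        · simp only [ne_eq, List.take_eq_nil_iff]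
          push_neg
          exact ⟨by omega, hsne⟩
        · calc (s.take _).length ≤ s.length := by simp
            _ ≤ m := hsm
  refine ⟨T, ⟨⟨[], ⟨mkInl V [], by simp [encFun]⟩⟩, hclosed⟩, ?_, ?_⟩
  · -- specialness
    rintro η₀ ⟨x, hx⟩ hbranch ν hνT hpre hlen
    simp only at hx
    rcases hxv : x.1 with η | ⟨μ, m, s⟩
    · -- η₀ is a node of T₀
      rw [hxv, encFun_inl] at hx
      obtain ⟨y, hy⟩ := hνT
      simp only at hy
      have hxyle : AttachLe x.1 y.1 := (enc_le_iff x y).2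
        (by rw [hxv, encFun_inl, hx, hy]; exact hpre)
      rw [hxv] at hxyle
      rcases hyv : y.1 with ν' | ⟨ν', m', t⟩
      · -- immediate successor inside T₀
        rw [hyv, encFun_inl] at hy
        refine ⟨encFun lam (Sum.inl (ν' ++ [cEmb lam 0])), ⟨mkInl V (ν' ++ [cEmb lam 0]), rfl⟩,
          ?_, ?_⟩
        · rw [← hy, encFun_inl, List.map_append]
          exact List.prefix_append _ _
        · intro hcon
          have := congrArg List.length hcon
          rw [← hy] at this
          simp at this
      · -- immediate successor inside an attached tree
        rw [hyv] at hxyle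
        rw [attachLe_inl_inr] at hxyle
        obtain ⟨hm'V, htne, htm⟩ := y.2 ν' m' t hyv
        have hν'η : ν'.length = η.length := by
          have hl1 : ν.length = ν'.length + t.length := by
            rw [← hy, hyv]; exact henc_len ν' m' t
          have hl2 : η₀.length = η.length := by rw [← hx]; simp
          have hl3 := List.length_pos_iff.2 htne
          have hl4 := hxyle.length_le
          omega
        obtain rfl : η = ν' := hxyle.eq_of_length hν'η.symm
        have hl1 : ν.length = η.length + t.length := by
          rw [← hy, hyv]; exact henc_len η m' t
        have hl2 : η₀.length = η.length := by rw [← hx]; simp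
        have ht1 : t.length = 1 := by omega
        obtain ⟨t0, rfl⟩ := List.length_eq_one_iff.1 ht1
        have hm2 : 2 ≤ m' := hV2 _ _ hm'V
        set z : AttachCar lam V := ⟨Sum.inr (η, m', [t0, 0]), by
          rintro η' mv s' h'
          obtain ⟨rfl, rfl, rfl⟩ : η = η' ∧ m' = mv ∧ [t0, 0] = s' := by
            simpa [Prod.ext_iff] using h'
          exact ⟨hm'V, by simp, by simp; omega⟩⟩ with hz
        have hzv : z.1 = Sum.inr (η, m', [t0, 0]) := rfl
        refine ⟨encFun lam z.1, ⟨z, rfl⟩, ?_, ?_⟩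
        · rw [← hy]
          refine (enc_le_iff y z).1 ?_
          rw [hyv, hzv, attachLe_inr_inr]
          exact ⟨rfl, rfl, by simp [List.cons_prefix_cons]⟩
        · intro hcon
          have hlenz : (encFun lam z.1).length = η.length + 2 := by
            rw [hzv]
            simpa using henc_len η m' [t0, 0]
          have := congrArg List.length hcon
          omega
    · -- a node inside an attached tree is never contained in a branch
      exfalso
      obtain ⟨f, hf, hval⟩ := hbranch
      obtain ⟨hmV, hsne, hsm⟩ := x.2 μ m s hxv
      have hη₀len : η₀.length = μ.length + s.length := by rw [← hx, hxv]; exact henc_len μ m s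
      obtain ⟨y, hy⟩ := hf (μ.length + m + 1)
      simp only at hy
      have hpre2 : η₀ <+: (List.ofFn fun i : Fin (μ.length + m + 1) => f i) := by
        rw [hval]
        exact ofFn_prefix f (by omega)
      have hxyle : AttachLe x.1 y.1 := (enc_le_iff x y).2 (by rw [hx, hy]; exact hpre2)
      rw [hxv] at hxyle
      obtain ⟨t, hyv, hst⟩ := attachLe_inr_any.1 hxyle
      have htm := (y.2 μ m t hyv).2.2
      have hylen : (encFun lam y.1).length = μ.length + t.length := by
        rw [hyv]; exact henc_len μ m t
      have hn := congrArg List.length hy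
      simp only [List.length_ofFn] at hn
      omega
  · -- the order isomorphism
    refine ⟨Equiv.ofBijective
      (fun x : AttachCar lam V => (⟨encFun lam x.1, ⟨x, rfl⟩⟩ : {l : List lam // l ∈ T}))
      ⟨?_, ?_⟩, ?_⟩
    · intro x y h
      exact enc_inj (congrArg Subtype.val h)
    · rintro ⟨l, ⟨x, hx⟩⟩
      exact ⟨x, Subtype.ext hx⟩
    · intro x y
      exact enc_le_iff x y

end PartOne


/-- given a bijection `Φ : ω × ω → ω ∖ {0,1}`, the map sending an
`ℵ₀`-colored tree `M = (λ^{<ω}, ⊴, (P_j)_{j<ω})` to the attached tree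
`f(M) = T₀*(S_{V_M(η)} : η ∈ T₀)` satisfies: (i) `f(M)` is isomorphic (as a partial
order) to a special subtree of `λ^{<ω}`; and (ii) `M ≡∞ℵ₀ N` iff `f(M) ≡∞ℵ₀ f(N)`
(as orders alone). -/
theorem colored_to_special_tree (lam : Type) [Infinite lam] (Φ : ℕ × ℕ → ℕ)
    (hΦinj : Function.Injective Φ) (hΦ0 : ∀ p, Φ p ≠ 0 ∧ Φ p ≠ 1)
    (hΦsurj : ∀ c : ℕ, c ≠ 0 → c ≠ 1 → ∃ p, Φ p = c) :
    (∀ P : ℕ → Set (List lam),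
      ∃ T : Set (List lam), IsSubtree T ∧ IsSpecial T ∧
        ∃ e : AttachCar lam (colorSet Φ P) ≃ {l : List lam // l ∈ T},
          ∀ x y : AttachCar lam (colorSet Φ P), AttachLe x.1 y.1 ↔ (e x).1 <+: (e y).1) ∧
    (∀ P Q : ℕ → Set (List lam),
      ColBackForth P Q ↔
        BackForth (fun x y : AttachCar lam (colorSet Φ P) => AttachLe x.1 y.1)
          (fun x y : AttachCar lam (colorSet Φ Q) => AttachLe x.1 y.1)) := by
  
  constructor
  · intro P
    refine part_one (colorSet Φ P) ?_
    rintro η m ⟨j, -, rfl⟩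
    have h1 := (hΦ0 (η.length, j)).1
    have h2 := (hΦ0 (η.length, j)).2
    omega
  · intro P Q
    constructor
    · exact forward_dir
    · exact backward_dir hΦinj hΦ0
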